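/- For every natural number n, the following identity of polynomials in the two variables w and u holds: Σ_{k=0}^{n} (−1)^k C(n,k) (1+w)^{k(n−k)} Q_{n−k}(w,u) = (u − 1)^n, where Q_j(w,u) = Σ_{m,s} D(j,m,s) w^m u^s. (This is the coefficient-wise form of the identity DAG(z,w,u) = Set((u−1)z,w)/Set(−z,w).) -/

import Mathlib

/-- A finite labelled digraph (edge set on `Fin n`) is acyclic if the transitive
closure of its edge relation is irreflexive. -/
def DAcyclic {n : ℕ} (E : Finset (Fin n × Fin n)) : Prop :=
  Irreflexive (Relation.TransGen fun a b => (a, b) ∈ E)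

/-- Sources of a digraph: vertices with no incoming edge. -/
def dagSources {n : ℕ} (E : Finset (Fin n × Fin n)) : Finset (Fin n) :=
  Finset.univ.filter fun v => ∀ u, (u, v) ∉ E

open Classical in
/-- `Dcount n m k` = number of labelled DAGs on `n` vertices with `m` edges and
exactly `k` sources. -/
noncomputable def Dcount (n m k : ℕ) : ℕ :=
  (Finset.univ.filter fun E : Finset (Fin n × Fin n) =>
    DAcyclic E ∧ E.card = m ∧ (dagSources E).card = k).card

open Classical in
/-- `DcountE n m` = number of labelled DAGs on `n` vertices with `m` edges. -/
noncomputable def DcountE (n m : ℕ) : ℕ :=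
  (Finset.univ.filter fun E : Finset (Fin n × Fin n) =>
    DAcyclic E ∧ E.card = m).card

open Finset

namespace DagAux

open Classical in
/-- DAGs all of whose edges live inside the vertex subset `V`. -/
noncomputable def dagsOn {n : ℕ} (V : Finset (Fin n)) : Finset (Finset (Fin n × Fin n)) :=
  Finset.univ.filter fun E => DAcyclic E ∧ ∀ e ∈ E, e.1 ∈ V ∧ e.2 ∈ V

open Classical in
/-- Sources relative to a vertex subset. -/
noncomputable def srcIn {n : ℕ} (V : Finset (Fin n)) (E : Finset (Fin n × Fin n)) :
    Finset (Fin n) :=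
  V.filter fun v => ∀ x, (x, v) ∉ E

/-- Source-and-edge generating polynomial of DAGs on `V`. -/
noncomputable def PP (w u : ℝ) {n : ℕ} (V : Finset (Fin n)) : ℝ :=
  ∑ E ∈ dagsOn V, w ^ E.card * u ^ (srcIn V E).card

noncomputable def QQ (w u : ℝ) (j : ℕ) : ℝ := PP w u (Finset.univ : Finset (Fin j))

lemma mem_dagsOn {n : ℕ} {V : Finset (Fin n)} {E : Finset (Fin n × Fin n)} :
    E ∈ dagsOn V ↔ DAcyclic E ∧ ∀ e ∈ E, e.1 ∈ V ∧ e.2 ∈ V := by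
  simp [dagsOn]

lemma mem_srcIn {n : ℕ} {V : Finset (Fin n)} {E : Finset (Fin n × Fin n)} {v : Fin n} :
    v ∈ srcIn V E ↔ v ∈ V ∧ ∀ x, (x, v) ∉ E := by
  simp [srcIn]

/-- Every DAG on a nonempty vertex set has a source. -/
lemma exists_source {j : ℕ} (hj : 0 < j) {E : Finset (Fin j × Fin j)} (hE : DAcyclic E) :
    ∃ v : Fin j, ∀ x, (x, v) ∉ E := by
  let r : Fin j → Fin j → Prop := Relation.TransGen fun a b => (a, b) ∈ E
  haveI : IsTrans (Fin j) r := ⟨fun _ _ _ h h' => h.trans h'⟩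
  haveI : IsIrrefl (Fin j) r := ⟨hE⟩
  have wf := Finite.wellFounded_of_trans_of_irrefl r
  obtain ⟨m, -, hm⟩ := wf.has_min Set.univ ⟨⟨0, hj⟩, trivial⟩
  exact ⟨m, fun x hx => hm x trivial (Relation.TransGen.single hx)⟩

/-- Binomial-type expansion over a powerset. -/
lemma sum_powerset_pow_card {α : Type*} (x : ℝ) (T : Finset α) :
    ∑ S ∈ T.powerset, x ^ S.card = (x + 1) ^ T.card := by
  rw [Finset.sum_powerset_apply_card]
  rw [add_pow]
  refine Finset.sum_congr rfl fun i _ => ?_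
  simp [mul_comm, nsmul_eq_mul]

-- NEW PART
private lemma transGen_image_rev {n j : ℕ} {f : Fin j → Fin n} (hf : Function.Injective f)
    {E' : Finset (Fin j × Fin j)} {x y : Fin n}
    (h : Relation.TransGen (fun a b => (a, b) ∈ E'.image (Prod.map f f)) x y) :
    ∃ a b, x = f a ∧ y = f b ∧ Relation.TransGen (fun a b : Fin j => (a, b) ∈ E') a b := by
  induction h with
  | single hxy =>
      rcases Finset.mem_image.1 hxy with ⟨⟨pa, pb⟩, hp, hpe⟩
      simp only [Prod.map, Prod.mk.injEq] at hpe
      exact ⟨pa, pb, hpe.1.symm, hpe.2.symm, Relation.TransGen.single hp⟩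
  | tail _ hedge ih =>
      rcases ih with ⟨a, b, hx, hm, htg⟩
      rcases Finset.mem_image.1 hedge with ⟨⟨pa, pb⟩, hp, hpe⟩
      simp only [Prod.map, Prod.mk.injEq] at hpe
      have hb : pa = b := hf (hpe.1.trans hm)
      refine ⟨a, pb, hx, hpe.2.symm, htg.tail ?_⟩
      rwa [hb] at hp

lemma PP_relabel (w u : ℝ) {n : ℕ} (V : Finset (Fin n)) : PP w u V = QQ w u V.card := by
  classical
  set j := V.card with hj
  let e := V.orderIsoOfFin hj.symm
  set f : Fin j → Fin n := fun i => (e i : Fin n) with hfdef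
  have hinj : Function.Injective f := fun a b hab => e.injective (Subtype.ext hab)
  have hmem : ∀ i, f i ∈ V := fun i => (e i).2
  have hsurj : ∀ v ∈ V, ∃ i, f i = v := fun v hv => ⟨e.symm ⟨v, hv⟩, by simp [hfdef]⟩
  have hpinj : Function.Injective (Prod.map f f) := Function.Injective.prodMap hinj hinj
  set Φ : Finset (Fin j × Fin j) → Finset (Fin n × Fin n) :=
    fun E' => E'.image (Prod.map f f) with hΦ
  set Ψ : Finset (Fin n × Fin n) → Finset (Fin j × Fin j) :=
    fun E => Finset.univ.filter fun p => (f p.1, f p.2) ∈ E with hΨ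
  have hΨΦ : ∀ E', Ψ (Φ E') = E' := by
    intro E'
    ext ⟨a, b⟩
    simp only [hΨ, hΦ, Finset.mem_filter, Finset.mem_univ, true_and, Finset.mem_image]
    constructor
    · rintro ⟨p, hp, hpe⟩
      have : p = (a, b) := hpinj hpe
      rwa [this] at hp
    · intro h; exact ⟨(a, b), h, rfl⟩
  have hΦΨ : ∀ E ∈ dagsOn V, Φ (Ψ E) = E := by
    intro E hE
    rcases mem_dagsOn.1 hE with ⟨-, hEV⟩
    ext ⟨x, y⟩
    simp only [hΦ, hΨ, Finset.mem_image, Finset.mem_filter, Finset.mem_univ, true_and]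
    constructor
    · rintro ⟨p, hp, hpe⟩
      have h1 : f p.1 = x := congrArg Prod.fst hpe
      have h2 : f p.2 = y := congrArg Prod.snd hpe
      rwa [h1, h2] at hp
    · intro h
      obtain ⟨hx, hy⟩ := hEV _ h
      obtain ⟨a, ha⟩ := hsurj x hx
      obtain ⟨b, hb⟩ := hsurj y hy
      exact ⟨(a, b), by rw [ha, hb]; exact h, by simp [Prod.map, ha, hb]⟩
  have hcard : ∀ E', (Φ E').card = E'.card := fun E' => Finset.card_image_of_injective _ hpinj
  have hsrc : ∀ E', srcIn V (Φ E') = (srcIn Finset.univ E').image f := by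
    intro E'
    ext v
    simp only [mem_srcIn, Finset.mem_image]
    constructor
    · rintro ⟨hv, hnov⟩
      obtain ⟨a, ha⟩ := hsurj v hv
      refine ⟨a, ⟨Finset.mem_univ _, fun x hx => ?_⟩, ha⟩
      exact hnov (f x) (by
        subst ha
        exact Finset.mem_image.2 ⟨(x, a), hx, rfl⟩)
    · rintro ⟨a, ⟨-, hnoa⟩, rfl⟩
      refine ⟨hmem a, fun x hx => ?_⟩
      rcases Finset.mem_image.1 hx with ⟨p, hp, hpe⟩
      have h2 : f p.2 = f a := congrArg Prod.snd hpe
      have : p.2 = a := hinj h2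
      exact hnoa p.1 (this ▸ (show (p.1, p.2) ∈ E' from hp))
  have hΦmem : ∀ E' ∈ dagsOn (Finset.univ : Finset (Fin j)), Φ E' ∈ dagsOn V := by
    intro E' hE'
    rcases mem_dagsOn.1 hE' with ⟨hac, -⟩
    refine mem_dagsOn.2 ⟨?_, ?_⟩
    · intro x hx
      obtain ⟨a, b, hxa, hxb, htg⟩ := transGen_image_rev hinj hx
      have : a = b := hinj (hxa.symm.trans hxb)
      exact hac a (this ▸ htg)
    · rintro ⟨x, y⟩ hxy
      rcases Finset.mem_image.1 hxy with ⟨p, hp, hpe⟩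
      have h1 : f p.1 = x := congrArg Prod.fst hpe
      have h2 : f p.2 = y := congrArg Prod.snd hpe
      exact ⟨h1 ▸ hmem p.1, h2 ▸ hmem p.2⟩
  have hΨmem : ∀ E ∈ dagsOn V, Ψ E ∈ dagsOn (Finset.univ : Finset (Fin j)) := by
    intro E hE
    rcases mem_dagsOn.1 hE with ⟨hac, -⟩
    refine mem_dagsOn.2 ⟨?_, fun e _ => ⟨Finset.mem_univ _, Finset.mem_univ _⟩⟩
    intro a ha
    have := Relation.TransGen.lift (p := fun x y => (x, y) ∈ E) f
      (fun a b (h : (a, b) ∈ Ψ E) => (Finset.mem_filter.1 h).2) a a ha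
    exact hac (f a) this
  unfold QQ PP
  refine Finset.sum_nbij' Ψ Φ hΨmem hΦmem hΦΨ (fun E' _ => hΨΦ E') ?_
  intro E hE
  conv_lhs => rw [← hΦΨ E hE]
  rw [hcard, hsrc, Finset.card_image_of_injective _ hinj]
private lemma transGen_avoid {n : ℕ} {S : Finset (Fin n)} {E : Finset (Fin n × Fin n)}
    (hno : ∀ e ∈ E, e.2 ∉ S) {a b : Fin n} (ha : a ∉ S)
    (h : Relation.TransGen (fun x y => (x, y) ∈ E) a b) :
    Relation.TransGen (fun x y => (x, y) ∈ E.filter (fun e => e.1 ∉ S)) a b ∧ b ∉ S := by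
  classical
  induction h with
  | single h =>
      exact ⟨Relation.TransGen.single (Finset.mem_filter.2 ⟨h, ha⟩), hno _ h⟩
  | tail _ hedge ih =>
      exact ⟨ih.1.tail (Finset.mem_filter.2 ⟨hedge, ih.2⟩), hno _ hedge⟩

private lemma transGen_has_in_edge {n : ℕ} {E : Finset (Fin n × Fin n)} {a b : Fin n}
    (h : Relation.TransGen (fun x y => (x, y) ∈ E) a b) : ∃ c, (c, b) ∈ E := by
  cases h with
  | single h => exact ⟨_, h⟩
  | tail _ h => exact ⟨_, h⟩

lemma split (w : ℝ) {n : ℕ} {S V : Finset (Fin n)} (hS : S ⊆ V) :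
    ∑ E ∈ (dagsOn V).filter (fun E => S ⊆ srcIn V E), w ^ E.card
      = (1 + w) ^ (S.card * (V \ S).card) * ∑ B ∈ dagsOn (V \ S), w ^ B.card := by
  classical
  have hrhs : (1 + w) ^ (S.card * (V \ S).card) * ∑ B ∈ dagsOn (V \ S), w ^ B.card
      = ∑ p ∈ (S ×ˢ (V \ S)).powerset ×ˢ dagsOn (V \ S), w ^ p.1.card * w ^ p.2.card := by
    rw [Finset.sum_product]
    rw [add_comm 1 w, ← Finset.card_product S (V \ S), ← sum_powerset_pow_card w]
    rw [Finset.sum_mul]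
    exact Finset.sum_congr rfl fun F _ => by rw [Finset.mul_sum]
  rw [hrhs]
  refine Finset.sum_nbij'
    (fun E => (E.filter (fun e => e.1 ∈ S), E.filter (fun e => e.1 ∉ S)))
    (fun p => p.1 ∪ p.2) ?_ ?_ ?_ ?_ ?_
  · -- forward membership
    intro E hE
    rcases Finset.mem_filter.1 hE with ⟨hEd, hsrc⟩
    rcases mem_dagsOn.1 hEd with ⟨hac, hEV⟩
    have hnoS : ∀ e ∈ E, e.2 ∉ S := by
      intro e he hin
      exact (mem_srcIn.1 (hsrc hin)).2 e.1 (show (e.1, e.2) ∈ E from he)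
    rw [Finset.mem_product]
    constructor
    · rw [Finset.mem_powerset]
      intro e he
      rcases Finset.mem_filter.1 he with ⟨heE, he1⟩
      exact Finset.mem_product.2 ⟨he1, Finset.mem_sdiff.2 ⟨(hEV e heE).2, hnoS e heE⟩⟩
    · refine mem_dagsOn.2 ⟨?_, ?_⟩
      · intro a h
        exact hac a (Relation.TransGen.mono (fun x y hxy => (Finset.mem_filter.1 hxy).1) _ _ h)
      · intro e he
        rcases Finset.mem_filter.1 he with ⟨heE, he1⟩
        exact ⟨Finset.mem_sdiff.2 ⟨(hEV e heE).1, he1⟩,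
          Finset.mem_sdiff.2 ⟨(hEV e heE).2, hnoS e heE⟩⟩
  · -- backward membership
    rintro ⟨F, B⟩ hp
    rw [Finset.mem_product] at hp
    obtain ⟨hF, hB⟩ := hp
    rw [Finset.mem_powerset] at hF
    rcases mem_dagsOn.1 hB with ⟨hBac, hBV⟩
    have hendT : ∀ e ∈ F ∪ B, e.2 ∈ V \ S := by
      intro e he
      rcases Finset.mem_union.1 he with h | h
      · exact (Finset.mem_product.1 (hF h)).2
      · exact (hBV e h).2
    have hnoS : ∀ e ∈ F ∪ B, e.2 ∉ S := fun e he => (Finset.mem_sdiff.1 (hendT e he)).2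
    have hsub : (F ∪ B).filter (fun e => e.1 ∉ S) ⊆ B := by
      intro e he
      rcases Finset.mem_filter.1 he with ⟨heU, he1⟩
      rcases Finset.mem_union.1 heU with h | h
      · exact absurd (Finset.mem_product.1 (hF h)).1 he1
      · exact h
    refine Finset.mem_filter.2 ⟨mem_dagsOn.2 ⟨?_, ?_⟩, ?_⟩
    · intro a h
      have haS : a ∉ S := by
        obtain ⟨c, hc⟩ := transGen_has_in_edge h
        exact hnoS _ hc
      have := (transGen_avoid hnoS haS h).1
      exact hBac a (Relation.TransGen.mono (fun x y hxy => hsub hxy) _ _ this)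
    · intro e he
      rcases Finset.mem_union.1 he with h | h
      · exact ⟨hS (Finset.mem_product.1 (hF h)).1,
          (Finset.mem_sdiff.1 (Finset.mem_product.1 (hF h)).2).1⟩
      · exact ⟨(Finset.mem_sdiff.1 (hBV e h).1).1, (Finset.mem_sdiff.1 (hBV e h).2).1⟩
    · intro v hv
      refine mem_srcIn.2 ⟨hS hv, fun x hx => ?_⟩
      exact (Finset.mem_sdiff.1 (hendT (x, v) hx)).2 hv
  · -- left inverse
    intro E _
    exact Finset.filter_union_filter_not_eq _ E
  · -- right inverse
    rintro ⟨F, B⟩ hp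
    rw [Finset.mem_product] at hp
    obtain ⟨hF, hB⟩ := hp
    rw [Finset.mem_powerset] at hF
    rcases mem_dagsOn.1 hB with ⟨-, hBV⟩
    have hFS : ∀ e ∈ F, e.1 ∈ S := fun e he => (Finset.mem_product.1 (hF he)).1
    have hBS : ∀ e ∈ B, e.1 ∉ S := fun e he => (Finset.mem_sdiff.1 (hBV e he).1).2
    have h1 : (F ∪ B).filter (fun e => e.1 ∈ S) = F := by
      ext e
      simp only [Finset.mem_filter, Finset.mem_union]
      exact ⟨fun ⟨h, hS'⟩ => h.resolve_right fun hb => hBS e hb hS',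
        fun h => ⟨Or.inl h, hFS e h⟩⟩
    have h2 : (F ∪ B).filter (fun e => e.1 ∉ S) = B := by
      ext e
      simp only [Finset.mem_filter, Finset.mem_union]
      exact ⟨fun ⟨h, hS'⟩ => h.resolve_left fun hf => hS' (hFS e hf),
        fun h => ⟨Or.inr h, hBS e h⟩⟩
    simp [h1, h2]
  · -- weights
    intro E hE
    rcases Finset.mem_filter.1 hE with ⟨-, -⟩
    have hu : E.filter (fun e => e.1 ∈ S) ∪ E.filter (fun e => e.1 ∉ S) = E :=
      Finset.filter_union_filter_not_eq _ E
    have hd : Disjoint (E.filter (fun e => e.1 ∈ S)) (E.filter (fun e => e.1 ∉ S)) :=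
      Finset.disjoint_filter_filter_not E E _
    rw [← pow_add, ← Finset.card_union_of_disjoint hd, hu]

lemma A_V (w u : ℝ) {n : ℕ} (V : Finset (Fin n)) :
    PP w u V = ∑ S ∈ V.powerset, (u - 1) ^ S.card *
      ((1 + w) ^ (S.card * (V \ S).card) * PP w 1 (V \ S)) := by
  classical
  have hPP1 : ∀ (W : Finset (Fin n)), PP w 1 W = ∑ B ∈ dagsOn W, w ^ B.card := by
    intro W; unfold PP; simp
  conv_lhs => rw [PP]
  have hstep : ∀ E ∈ dagsOn V, w ^ E.card * u ^ (srcIn V E).card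
      = ∑ S ∈ (srcIn V E).powerset, w ^ E.card * (u - 1) ^ S.card := by
    intro E _
    rw [← Finset.mul_sum, sum_powerset_pow_card (u - 1), sub_add_cancel]
  rw [Finset.sum_congr rfl hstep]
  rw [Finset.sum_comm'
    (s' := fun S => (dagsOn V).filter (fun E => S ⊆ srcIn V E)) (t' := V.powerset)
    (h := by
      intro E S
      simp only [Finset.mem_powerset, Finset.mem_filter]
      constructor
      · rintro ⟨hE, hsub⟩
        exact ⟨⟨hE, hsub⟩, hsub.trans (Finset.filter_subset _ _)⟩
      · rintro ⟨⟨hE, hsub⟩, -⟩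
        exact ⟨hE, hsub⟩)]
  refine Finset.sum_congr rfl fun S hS => ?_
  rw [Finset.mem_powerset] at hS
  rw [hPP1, ← split w hS]
  rw [Finset.mul_sum]
  exact Finset.sum_congr rfl fun E _ => mul_comm _ _

lemma QQ_rec (w u : ℝ) (j : ℕ) :
    QQ w u j = ∑ i ∈ Finset.range (j + 1),
      (j.choose i : ℝ) * (u - 1) ^ i * (1 + w) ^ (i * (j - i)) * QQ w 1 (j - i) := by
  have hA := A_V w u (Finset.univ : Finset (Fin j))
  rw [QQ, hA, Finset.sum_powerset]
  have hcu : (Finset.univ : Finset (Fin j)).card = j := by simp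
  rw [hcu]
  refine Finset.sum_congr rfl fun i hi => ?_
  have hconst : ∀ S ∈ Finset.powersetCard i (Finset.univ : Finset (Fin j)),
      (u - 1) ^ S.card * ((1 + w) ^ (S.card * ((Finset.univ : Finset (Fin j)) \ S).card)
        * PP w 1 ((Finset.univ : Finset (Fin j)) \ S))
      = (u - 1) ^ i * ((1 + w) ^ (i * (j - i)) * QQ w 1 (j - i)) := by
    intro S hS
    obtain ⟨hsub, hcard⟩ := Finset.mem_powersetCard.1 hS
    have hsd : ((Finset.univ : Finset (Fin j)) \ S).card = j - i := by
      rw [Finset.card_sdiff_of_subset hsub, hcu, hcard]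
    rw [PP_relabel, hsd, hcard]
  rw [Finset.sum_congr rfl hconst, Finset.sum_const, Finset.card_powersetCard, hcu,
    nsmul_eq_mul]
  ring

lemma QQ_zero_u (w : ℝ) (j : ℕ) : QQ w 0 j = if j = 0 then 1 else 0 := by
  classical
  rcases Nat.eq_zero_or_pos j with h | h
  · subst h
    rw [if_pos rfl, QQ, PP]
    have hall : ∀ E : Finset (Fin 0 × Fin 0), E = ∅ :=
      fun E => Finset.eq_empty_of_forall_notMem (fun p _ => p.1.elim0)
    have hd : dagsOn (Finset.univ : Finset (Fin 0)) = {∅} := by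
      ext E
      rw [mem_dagsOn]
      constructor
      · intro _; simp [hall E]
      · intro hE
        refine ⟨fun a => a.elim0, fun e _ => e.1.elim0⟩
    rw [hd]
    simp [srcIn]
  · rw [if_neg h.ne', QQ, PP]
    refine Finset.sum_eq_zero fun E hE => ?_
    rcases mem_dagsOn.1 hE with ⟨hac, -⟩
    obtain ⟨v, hv⟩ := exists_source h hac
    have hvmem : v ∈ srcIn Finset.univ E := mem_srcIn.2 ⟨Finset.mem_univ _, hv⟩
    have hpos : 0 < (srcIn Finset.univ E).card := Finset.card_pos.2 ⟨v, hvmem⟩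
    rw [zero_pow hpos.ne', mul_zero]

lemma robinson (w : ℝ) (j : ℕ) :
    ∑ i ∈ Finset.range (j + 1),
        (-1 : ℝ) ^ i * (j.choose i : ℝ) * (1 + w) ^ (i * (j - i)) * QQ w 1 (j - i)
      = if j = 0 then 1 else 0 := by
  have h := QQ_rec w 0 j
  rw [QQ_zero_u] at h
  rw [h]
  refine Finset.sum_congr rfl fun i _ => ?_
  rw [zero_sub]
  ring

lemma srcIn_univ {j : ℕ} (E : Finset (Fin j × Fin j)) :
    srcIn (Finset.univ : Finset (Fin j)) E = dagSources E := by
  ext v; simp [srcIn, dagSources]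

lemma tsum_eq_QQ (w u : ℝ) (j : ℕ) :
    ∑' p : ℕ × ℕ, (Dcount j p.1 p.2 : ℝ) * w ^ p.1 * u ^ p.2 = QQ w u j := by
  classical
  set box := Finset.range (j * j + 1) ×ˢ Finset.range (j + 1) with hbox
  have hzero : ∀ p : ℕ × ℕ, p ∉ box → (Dcount j p.1 p.2 : ℝ) * w ^ p.1 * u ^ p.2 = 0 := by
    intro p hp
    have hD : Dcount j p.1 p.2 = 0 := by
      rw [Dcount, Finset.card_eq_zero, Finset.filter_eq_empty_iff]
      rintro E - ⟨-, hcard, hsrc⟩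
      apply hp
      rw [hbox, Finset.mem_product, Finset.mem_range, Finset.mem_range]
      constructor
      · rw [← hcard]
        refine Nat.lt_succ_of_le (le_trans (Finset.card_le_univ E) ?_)
        simp
      · rw [← hsrc]
        refine Nat.lt_succ_of_le (le_trans (Finset.card_le_univ _) ?_)
        simp
    rw [hD]
    simp
  rw [tsum_eq_sum hzero, QQ, PP]
  have hmaps : ∀ E ∈ dagsOn (Finset.univ : Finset (Fin j)),
      (E.card, (dagSources E).card) ∈ box := by
    intro E _
    rw [hbox, Finset.mem_product, Finset.mem_range, Finset.mem_range]
    constructor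
    · refine Nat.lt_succ_of_le (le_trans (Finset.card_le_univ E) ?_)
      simp
    · refine Nat.lt_succ_of_le (le_trans (Finset.card_le_univ (dagSources E)) ?_)
      simp
  rw [← Finset.sum_fiberwise_of_maps_to hmaps
    (fun E => w ^ E.card * u ^ (srcIn Finset.univ E).card)]
  refine Finset.sum_congr rfl fun p _ => ?_
  have hset : (dagsOn (Finset.univ : Finset (Fin j))).filter
        (fun E => (E.card, (dagSources E).card) = p)
      = Finset.univ.filter fun E : Finset (Fin j × Fin j) =>
          DAcyclic E ∧ E.card = p.1 ∧ (dagSources E).card = p.2 := by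
    ext E
    simp [mem_dagsOn, dagsOn, Prod.ext_iff, and_assoc]
  have hconst : ∀ E ∈ (dagsOn (Finset.univ : Finset (Fin j))).filter
      (fun E => (E.card, (dagSources E).card) = p),
      w ^ E.card * u ^ (srcIn Finset.univ E).card = w ^ p.1 * u ^ p.2 := by
    intro E hE
    rcases Finset.mem_filter.1 hE with ⟨-, hp⟩
    rw [srcIn_univ, ← hp]
  rw [Finset.sum_congr rfl hconst, Finset.sum_const, nsmul_eq_mul, Dcount, ← hset, mul_assoc]

end DagAux

theorem dag_source_identity (n : ℕ) (w u : ℝ) :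
    ∑ k ∈ Finset.range (n + 1),
        (-1 : ℝ) ^ k * (n.choose k) * (1 + w) ^ (k * (n - k))
          * ∑' p : ℕ × ℕ, (Dcount (n - k) p.1 p.2 : ℝ) * w ^ p.1 * u ^ p.2
      = (u - 1) ^ n := by
  classical
  open DagAux in
  have step1 : ∀ k ∈ Finset.range (n + 1),
      (-1 : ℝ) ^ k * (n.choose k) * (1 + w) ^ (k * (n - k))
          * ∑' p : ℕ × ℕ, (Dcount (n - k) p.1 p.2 : ℝ) * w ^ p.1 * u ^ p.2
      = ∑ i ∈ Finset.range (n - k + 1),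
          ((u - 1) ^ i * ((n.choose i : ℝ)) * (1 + w) ^ (i * (n - i)))
            * ((-1 : ℝ) ^ k * ((n - i).choose k : ℝ) * (1 + w) ^ (k * (n - i - k))
                * QQ w 1 (n - i - k)) := by
    intro k hk
    have hkn : k ≤ n := Nat.lt_succ_iff.1 (Finset.mem_range.1 hk)
    rw [tsum_eq_QQ, QQ_rec, Finset.mul_sum]
    refine Finset.sum_congr rfl fun i hi => ?_
    have hikn : k + i ≤ n := by
      have := Nat.lt_succ_iff.1 (Finset.mem_range.1 hi)
      omega
    obtain ⟨m, hm⟩ : ∃ m, n = k + i + m := ⟨n - k - i, by omega⟩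
    have e1 : n - k = i + m := by omega
    have e2 : n - k - i = m := by omega
    have e3 : n - i = k + m := by omega
    have e4 : n - i - k = m := by omega
    have hchoose : (n.choose k : ℝ) * ((n - k).choose i : ℝ)
        = (n.choose i : ℝ) * ((n - i).choose k : ℝ) := by
      have h1 := Nat.choose_mul (n := n) (show i ≤ k + i from Nat.le_add_left i k)
      have h2 := Nat.choose_mul (n := n) (show k ≤ k + i from Nat.le_add_right k i)
      have h3 : (k + i).choose i = (k + i).choose k := by
        have := Nat.choose_symm (Nat.le_add_right k i)
        simpa [Nat.add_sub_cancel_left] using this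
      have h4 : k + i - i = k := by omega
      have h5 : k + i - k = i := by omega
      rw [h4] at h1
      rw [h5] at h2
      have : n.choose k * (n - k).choose i = n.choose i * (n - i).choose k := by
        rw [← h2, ← h1, h3]
      exact_mod_cast congrArg (Nat.cast : ℕ → ℝ) this
    have he24 : n - k - i = n - i - k := by omega
    have hnat : k * (n - k) + i * (n - i - k) = i * (n - i) + k * (n - i - k) := by
      rw [e1, e3]; simp only [Nat.add_sub_cancel_left]; ring
    have hexp : (1 + w) ^ (k * (n - k)) * (1 + w) ^ (i * (n - i - k))
        = (1 + w) ^ (i * (n - i)) * (1 + w) ^ (k * (n - i - k)) := by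
      rw [← pow_add, ← pow_add, hnat]
    rw [he24]
    calc (-1 : ℝ) ^ k * (n.choose k) * (1 + w) ^ (k * (n - k))
          * ((((n - k).choose i : ℝ)) * (u - 1) ^ i * (1 + w) ^ (i * (n - i - k))
              * QQ w 1 (n - i - k))
        = ((n.choose k : ℝ) * ((n - k).choose i : ℝ))
            * ((1 + w) ^ (k * (n - k)) * (1 + w) ^ (i * (n - i - k)))
            * ((-1 : ℝ) ^ k * (u - 1) ^ i * QQ w 1 (n - i - k)) := by ring
      _ = ((n.choose i : ℝ) * ((n - i).choose k : ℝ))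
            * ((1 + w) ^ (i * (n - i)) * (1 + w) ^ (k * (n - i - k)))
            * ((-1 : ℝ) ^ k * (u - 1) ^ i * QQ w 1 (n - i - k)) := by rw [hchoose, hexp]
      _ = (u - 1) ^ i * ((n.choose i : ℝ)) * (1 + w) ^ (i * (n - i))
            * ((-1 : ℝ) ^ k * (((n - i)).choose k : ℝ) * (1 + w) ^ (k * (n - i - k))
                * QQ w 1 (n - i - k)) := by ring
  rw [Finset.sum_congr rfl step1]
  rw [Finset.sum_comm'
    (s' := fun i => Finset.range (n - i + 1)) (t' := Finset.range (n + 1))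
    (h := by
      intro k i
      simp only [Finset.mem_range]
      omega)]
  have step3 : ∀ i ∈ Finset.range (n + 1),
      ∑ k ∈ Finset.range (n - i + 1),
          ((u - 1) ^ i * ((n.choose i : ℝ)) * (1 + w) ^ (i * (n - i)))
            * ((-1 : ℝ) ^ k * ((n - i).choose k : ℝ) * (1 + w) ^ (k * (n - i - k))
                * QQ w 1 (n - i - k))
      = ((u - 1) ^ i * ((n.choose i : ℝ)) * (1 + w) ^ (i * (n - i)))
          * (if n - i = 0 then 1 else 0) := by
    intro i _
    rw [← Finset.mul_sum, ← robinson w (n - i)]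
  rw [Finset.sum_congr rfl step3]
  rw [Finset.sum_eq_single n]
  · simp
  · intro i hi hne
    have : n - i ≠ 0 := by
      have := Nat.lt_succ_iff.1 (Finset.mem_range.1 hi)
      omega
    rw [if_neg this, mul_zero]
  · intro h
    exact absurd (Finset.self_mem_range_succ n) h
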